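/- For fixed d ≥ 2 and m = m(n) = (1/2)·C(n,d) (over n such that C(n,d) is even), the limit as n → ∞ of C(n, d-1) · C(2m - n + d - 1, m) / C(2m, m) equals 0; equivalently, the asymptotic density of m-element subsets of M(n,d) that are lower perfect tends to 1. -/

import Mathlib

open Filter

lemma choose_mono_half {n k l : ℕ} (hkl : k ≤ l) (hl : l ≤ n / 2) :
    Nat.choose n k ≤ Nat.choose n l := by
  induction l, hkl using Nat.le_induction with
  | base => exact le_refl _
  | succ l hkl ih =>
    exact (ih (by omega)).trans (Nat.choose_le_succ_of_lt_half_left (by omega))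

lemma lemA (m N : ℕ) (hm : 1 ≤ m) (hN : N < 2 * m) :
    2 * Nat.choose N m ≤ Nat.choose (N + 1) m := by
  rcases lt_or_ge N m with h | h
  · simp [Nat.choose_eq_zero_of_lt h]
  · obtain ⟨m', rfl⟩ : ∃ m', m = m' + 1 := ⟨m - 1, by omega⟩
    rw [Nat.choose_succ_succ]
    simp only [Nat.succ_eq_add_one]
    have key : Nat.choose N (m' + 1) ≤ Nat.choose N m' := by
      have h1 := Nat.choose_succ_right_eq N m'
      have h2 : N - m' ≤ m' + 1 := by omega
      have := Nat.mul_le_mul_left (Nat.choose N m') h2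
      have h3 : Nat.choose N (m' + 1) * (m' + 1) ≤ Nat.choose N m' * (m' + 1) := by
        calc Nat.choose N (m' + 1) * (m' + 1) = Nat.choose N m' * (N - m') := h1
        _ ≤ Nat.choose N m' * (m' + 1) := Nat.mul_le_mul_left _ h2
      exact Nat.le_of_mul_le_mul_right h3 (by omega)
    omega

lemma lemB (m k : ℕ) (hk : k ≤ m) :
    2 ^ k * Nat.choose (2 * m - k) m ≤ Nat.choose (2 * m) m := by
  induction k with
  | zero => simp
  | succ k ih =>
    have h1 : 2 * Nat.choose (2 * m - (k + 1)) m ≤ Nat.choose (2 * m - k) m := by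
      have := lemA m (2 * m - (k + 1)) (by omega) (by omega)
      have harg : 2 * m - (k + 1) + 1 = 2 * m - k := by omega
      rwa [harg] at this
    calc 2 ^ (k + 1) * Nat.choose (2 * m - (k + 1)) m
        = 2 ^ k * (2 * Nat.choose (2 * m - (k + 1)) m) := by ring
      _ ≤ 2 ^ k * Nat.choose (2 * m - k) m := Nat.mul_le_mul_left _ h1
      _ ≤ Nat.choose (2 * m) m := ih (by omega)

/-- For fixed `d ≥ 2` and `m = m(n) = (1/2)·C(n,d)`, along those `n` for which `C(n,d)`
is even, `C(n,d-1) · C(2m-n+d-1, m) / C(2m, m) → 0` as `n → ∞`; i.e., the asymptotic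
density of `m`-element lower perfect subsets of `M(n,d)` tends to `1`. -/
theorem stmt2 (d : ℕ) (hd : 2 ≤ d) :
    Tendsto
      (fun n : ℕ =>
        ((Nat.choose n (d - 1) : ℝ) *
            (Nat.choose (2 * (Nat.choose n d / 2) - n + d - 1) (Nat.choose n d / 2) : ℝ)) /
          (Nat.choose (2 * (Nat.choose n d / 2)) (Nat.choose n d / 2) : ℝ))
      (atTop ⊓ Filter.principal {n : ℕ | Even (Nat.choose n d)}) (nhds 0) := by
  apply Tendsto.mono_left _ inf_le_left
  apply squeeze_zero' (g := fun n : ℕ =>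
    (2 : ℝ) ^ (d - 1) * ((n : ℝ) ^ (d - 1) * (1 / 2 : ℝ) ^ n))
  · filter_upwards with n
    positivity
  · filter_upwards [eventually_ge_atTop (2 * d + 1)] with n hn
    set m := Nat.choose n d / 2 with hm
    -- m is large
    have hch2 : Nat.choose n 2 ≤ Nat.choose n d :=
      choose_mono_half hd (by omega)
    have hn2 : Nat.choose n 2 = n * (n - 1) / 2 := Nat.choose_two_right n
    have hmn : n ≤ m := by
      have : n * (n - 1) / 2 / 2 ≤ m := by
        rw [hm]; exact Nat.div_le_div_right (hn2 ▸ hch2)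
      have h4 : n * (n - 1) / 2 / 2 = n * (n - 1) / 4 := by
        rw [Nat.div_div_eq_div_mul]
      have : n * (n - 1) / 4 ≤ m := h4 ▸ this
      have h5 : 4 * n ≤ n * (n - 1) := by
        have := Nat.mul_le_mul_left n (show 4 ≤ n - 1 by omega); omega
      have : n ≤ n * (n - 1) / 4 := Nat.le_div_iff_mul_le (by norm_num) |>.2 (by omega)
      omega
    set k := n - (d - 1) with hk
    have harg : 2 * m - n + d - 1 = 2 * m - k := by omega
    have hkm : k ≤ m := by omega
    have hB := lemB m k hkm
    have hCpos : 0 < Nat.choose (2 * m) m := Nat.choose_pos (by omega)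
    have hCpos' : (0 : ℝ) < (Nat.choose (2 * m) m : ℝ) := by exact_mod_cast hCpos
    have hBR : (2 : ℝ) ^ k * (Nat.choose (2 * m - k) m : ℝ) ≤ (Nat.choose (2 * m) m : ℝ) := by
      exact_mod_cast hB
    have hApow : (Nat.choose n (d - 1) : ℝ) ≤ (n : ℝ) ^ (d - 1) := by
      exact_mod_cast Nat.choose_le_pow n (d - 1)
    rw [harg]
    have hstep1 : (Nat.choose n (d - 1) : ℝ) * (Nat.choose (2 * m - k) m : ℝ) /
        (Nat.choose (2 * m) m : ℝ) ≤ (n : ℝ) ^ (d - 1) * (1 / 2 : ℝ) ^ k := by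
      rw [div_le_iff₀ hCpos']
      calc (Nat.choose n (d - 1) : ℝ) * (Nat.choose (2 * m - k) m : ℝ)
          ≤ (n : ℝ) ^ (d - 1) * (Nat.choose (2 * m - k) m : ℝ) := by
            apply mul_le_mul_of_nonneg_right hApow (by positivity)
        _ ≤ (n : ℝ) ^ (d - 1) * ((1 / 2 : ℝ) ^ k * (Nat.choose (2 * m) m : ℝ)) := by
            apply mul_le_mul_of_nonneg_left _ (by positivity)
            rw [one_div, inv_pow, ← div_eq_inv_mul, le_div_iff₀ (by positivity)]
            linarith [hBR]
        _ = (n : ℝ) ^ (d - 1) * (1 / 2 : ℝ) ^ k * (Nat.choose (2 * m) m : ℝ) := by ring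
    refine hstep1.trans ?_
    have hpow : (1 / 2 : ℝ) ^ k = 2 ^ (d - 1) * (1 / 2 : ℝ) ^ n := by
      have hkd : k + (d - 1) = n := by omega
      have : (1 / 2 : ℝ) ^ n = (1 / 2 : ℝ) ^ k * (1 / 2 : ℝ) ^ (d - 1) := by
        rw [← pow_add, hkd]
      rw [this]
      field_simp
      rw [← mul_pow]; norm_num
    rw [hpow]; ring_nf; exact le_refl _
  · have := (tendsto_pow_const_mul_const_pow_of_lt_one (d - 1)
      (r := (1 / 2 : ℝ)) (by norm_num) (by norm_num)).const_mul ((2 : ℝ) ^ (d - 1))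
    simpa using this
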